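/- For the root systems A₂ and G₂ (both with hexagonal coroot lattice), the optimal discrete spectral measure supported on the vertices and edge-midpoints of the (rescaled) hexagonal Voronoi cell gives F(2r) = min over the Chebyshev image of 2z₁² − (2/3)z₁ − 1/3 = −7/18 for every r ∈ N, hence the spectral lower bound 1 − 1/F(2r) = 25/7 for χ_m(R², ∂Vor(Λ)), independent of r. -/

import Mathlib

noncomputable section
open scoped BigOperators

abbrev EV (n : ℕ) := EuclideanSpace ℝ (Fin n)

/-- The Weyl group `S₃` of `A₂` acting on `ℝ³` by permuting coordinates. -/
def permAct (p : Equiv.Perm (Fin 3)) (μ : EV 3) : EV 3 := WithLp.toLp 2 (fun j => μ (p j))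

/-- The generalized cosine for `A₂` (Weyl group `S₃`). -/
def a2Gencos (μ u : EV 3) : ℂ :=
  ((Fintype.card (Equiv.Perm (Fin 3)) : ℂ))⁻¹ *
    ∑ p : Equiv.Perm (Fin 3),
      Complex.exp (-(2 * Real.pi * Complex.I) * ((inner ℝ (permAct p μ) u : ℝ) : ℂ))

/-- The Weyl group `S₃ × {±1}` of `G₂` acting on `ℝ³`. -/
def g2Act (g : Equiv.Perm (Fin 3) × Bool) (μ : EV 3) : EV 3 :=
  WithLp.toLp 2 (fun j => (if g.2 then (1 : ℝ) else -1) * μ (g.1 j))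

/-- The generalized cosine for `G₂` (Weyl group `S₃ × {±1}`). -/
def g2Gencos (μ u : EV 3) : ℂ :=
  ((Fintype.card (Equiv.Perm (Fin 3) × Bool) : ℂ))⁻¹ *
    ∑ g : Equiv.Perm (Fin 3) × Bool,
      Complex.exp (-(2 * Real.pi * Complex.I) * ((inner ℝ (g2Act g μ) u : ℝ) : ℂ))

def a2ϖ₁ : EV 3 := WithLp.toLp 2 (fun j => ![2 / 3, -(1 / 3), -(1 / 3)] j)
def a2ϖ₂ : EV 3 := WithLp.toLp 2 (fun j => ![1 / 3, 1 / 3, -(2 / 3)] j)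
def g2ϖ₁ : EV 3 := WithLp.toLp 2 (fun j => ![0, -1, 1] j)
def g2ϖ₂ : EV 3 := WithLp.toLp 2 (fun j => ![-1, -1, 2] j)

/-- The `A₂` spectral combination `(2/3)·Θ_{rϖ₁+rϖ₂} + (1/6)·(Θ_{2rϖ₁} + Θ_{2rϖ₂})`. -/
def a2Expr (r : ℕ) (u : EV 3) : ℂ :=
  (2 / 3) * a2Gencos ((r : ℝ) • (a2ϖ₁ + a2ϖ₂)) u
    + (1 / 6) * (a2Gencos ((2 * r : ℝ) • a2ϖ₁) u + a2Gencos ((2 * r : ℝ) • a2ϖ₂) u)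

/-- The `G₂` spectral combination `(2/3)·Θ_{rϖ₂} + (1/3)·Θ_{2rϖ₁}`. -/
def g2Expr (r : ℕ) (u : EV 3) : ℂ :=
  (2 / 3) * g2Gencos ((r : ℝ) • g2ϖ₂) u + (1 / 3) * g2Gencos ((2 * r : ℝ) • g2ϖ₁) u


lemma perm3_sum {M : Type*} [AddCommMonoid M] (f : Equiv.Perm (Fin 3) → M) :
    ∑ p : Equiv.Perm (Fin 3), f p =
      f 1 + f (Equiv.swap 0 1) + f (Equiv.swap 0 2) + f (Equiv.swap 1 2)
      + f (Equiv.swap 0 1 * Equiv.swap 1 2) + f (Equiv.swap 1 2 * Equiv.swap 0 1) := by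
  rw [show (Finset.univ : Finset (Equiv.Perm (Fin 3))) =
    {1, Equiv.swap 0 1, Equiv.swap 0 2, Equiv.swap 1 2,
     Equiv.swap 0 1 * Equiv.swap 1 2, Equiv.swap 1 2 * Equiv.swap 0 1} from by decide]
  rw [Finset.sum_insert (by decide), Finset.sum_insert (by decide),
    Finset.sum_insert (by decide), Finset.sum_insert (by decide),
    Finset.sum_insert (by decide), Finset.sum_singleton]
  abel

lemma re_c (z : ℂ) : ((z.re : ℝ) : ℂ) = (z + (starRingEnd ℂ) z) / 2 := by
  rw [Complex.add_conj]; push_cast; ring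

lemma exp_pair (t : ℝ) : Complex.exp (-(2 * (Real.pi:ℂ) * Complex.I) * t)
    + Complex.exp ((2 * (Real.pi:ℂ) * Complex.I) * t) = 2 * ((Real.cos (2*Real.pi*t) : ℝ) : ℂ) := by
  rw [show (-(2 * (Real.pi:ℂ) * Complex.I) * t) = ((-(2*Real.pi*t) : ℝ) : ℂ) * Complex.I from by
      push_cast; ring,
    show ((2 * (Real.pi:ℂ) * Complex.I) * t) = (((2*Real.pi*t) : ℝ) : ℂ) * Complex.I from by
      push_cast; ring,
    Complex.exp_mul_I, Complex.exp_mul_I]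
  rw [Complex.ofReal_neg, Complex.cos_neg, Complex.sin_neg, ← Complex.ofReal_cos]
  ring

set_option maxHeartbeats 4000000 in
lemma a2_iden (r : ℕ) (u : EV 3) : a2Expr r u =
    ((2 * ((a2Gencos a2ϖ₁ ((r : ℝ) • u)).re) ^ 2
      - (2 / 3) * (a2Gencos a2ϖ₁ ((r : ℝ) • u)).re - 1 / 3 : ℝ) : ℂ) := by
  push_cast
  rw [re_c]
  unfold a2Expr a2Gencos
  rw [perm3_sum, perm3_sum, perm3_sum, perm3_sum]
  norm_num (config := { decide := true }) [permAct, a2ϖ₁, a2ϖ₂, PiLp.inner_apply, PiLp.toLp_apply, Matrix.cons_val,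
    Matrix.cons_val_two, Matrix.vecHead, Matrix.vecTail,
    RCLike.inner_apply, conj_trivial, Fin.sum_univ_three, Equiv.Perm.mul_apply,
    Equiv.swap_apply_def, Equiv.Perm.one_apply, PiLp.smul_apply, PiLp.add_apply,
    smul_eq_mul, Fintype.card_perm, Fintype.card_fin, Nat.factorial]
  simp only [map_mul, map_add, map_sub, map_neg, map_inv₀, map_ofNat, map_div₀,
    map_natCast, map_one, Complex.conj_I, Complex.conj_ofReal, ← Complex.exp_conj]
  ring_nf
  simp only [← Complex.exp_add, ← Complex.exp_nat_mul]
  ring_nf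
  try simp only [Complex.exp_zero]
  try ring_nf

set_option maxHeartbeats 4000000 in
lemma g2_iden (r : ℕ) (u : EV 3) : g2Expr r u =
    ((2 * ((g2Gencos g2ϖ₁ ((r : ℝ) • u)).re) ^ 2
      - (2 / 3) * (g2Gencos g2ϖ₁ ((r : ℝ) • u)).re - 1 / 3 : ℝ) : ℂ) := by
  push_cast
  rw [re_c]
  unfold g2Expr g2Gencos
  simp only [Fintype.sum_prod_type, Fintype.sum_bool]
  rw [perm3_sum, perm3_sum, perm3_sum]
  norm_num (config := { decide := true }) [g2Act, g2ϖ₁, g2ϖ₂, PiLp.inner_apply, PiLp.toLp_apply, Matrix.cons_val,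
    Matrix.cons_val_two, Matrix.vecHead, Matrix.vecTail,
    RCLike.inner_apply, conj_trivial, Fin.sum_univ_three, Equiv.Perm.mul_apply,
    Equiv.swap_apply_def, Equiv.Perm.one_apply, PiLp.smul_apply, PiLp.add_apply,
    smul_eq_mul, Fintype.card_perm, Fintype.card_fin, Nat.factorial, Fintype.card_prod,
    Fintype.card_bool]
  simp only [map_mul, map_add, map_sub, map_neg, map_inv₀, map_ofNat, map_div₀,
    map_natCast, map_one, Complex.conj_I, Complex.conj_ofReal, ← Complex.exp_conj]
  ring_nf
  simp only [← Complex.exp_add, ← Complex.exp_nat_mul]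
  ring_nf
  try simp only [Complex.exp_zero]
  try ring_nf

/-- For `A₂` and `G₂` (both with hexagonal coroot lattice), the optimal
discrete spectral measure supported on the vertices and edge-midpoints of the rescaled
hexagonal Voronoi cell reduces to the univariate quadratic `2z₁² − (2/3)z₁ − 1/3`, whose
minimum over the Chebyshev image is `F(2r) = −7/18` for every `r ≥ 1`; hence the spectral
lower bound `1 − 1/F(2r) = 25/7` for `χ_m(ℝ², ∂Vor(Λ))`, independent of `r`. -/
theorem statement19 (r : ℕ) (hr : 0 < r) :
    -- `A₂`: reduction to the quadratic `2z₁² − (2/3)z₁ − 1/3` with `z₁ = Re Θ_{ϖ₁}(ru)`: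
    (∀ u : EV 3, a2Expr r u =
      ((2 * ((a2Gencos a2ϖ₁ ((r : ℝ) • u)).re) ^ 2
        - (2 / 3) * (a2Gencos a2ϖ₁ ((r : ℝ) • u)).re - 1 / 3 : ℝ) : ℂ)) ∧
    -- `G₂`: the same reduction with `z₁ = Θ_{ϖ₁}(ru)`:
    (∀ u : EV 3, g2Expr r u =
      ((2 * ((g2Gencos g2ϖ₁ ((r : ℝ) • u)).re) ^ 2
        - (2 / 3) * (g2Gencos g2ϖ₁ ((r : ℝ) • u)).re - 1 / 3 : ℝ) : ℂ)) ∧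
    -- `F(2r) = −7/18` in both cases:
    IsLeast { x : ℝ | ∃ u : EV 3, a2Expr r u = (x : ℂ) } (-(7 / 18)) ∧
    IsLeast { x : ℝ | ∃ u : EV 3, g2Expr r u = (x : ℂ) } (-(7 / 18)) ∧
    -- hence the spectral lower bound `1 − 1/F(2r) = 25/7`:
    (1 - 1 / (-(7 / 18) : ℝ) = 25 / 7) := by
  have key25 : (1 - 1 / (-(7 / 18) : ℝ) = 25 / 7) := by norm_num
  set x₀ : ℝ := Real.arccos (-(1/4)) / (2*Real.pi*(r:ℝ)) with hx₀
  have hcos : Real.cos (2*Real.pi*((r:ℝ)*x₀)) = -(1/4) := by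
    rw [hx₀, show 2*Real.pi*((r:ℝ)*(Real.arccos (-(1/4)) / (2*Real.pi*(r:ℝ))))
        = Real.arccos (-(1/4)) from by
      have hrne : ((r:ℝ)) ≠ 0 := Nat.cast_ne_zero.mpr hr.ne'
      field_simp]
    exact Real.cos_arccos (by norm_num) (by norm_num)
  have keyA : a2Gencos a2ϖ₁ ((r:ℝ) • (WithLp.toLp 2 (fun j => ![x₀, -x₀, 0] j) : EV 3)) = (((1:ℝ)/6 : ℝ) : ℂ) := by
    unfold a2Gencos
    rw [perm3_sum]
    norm_num (config := { decide := true }) [permAct, a2ϖ₁, PiLp.inner_apply, PiLp.toLp_apply, Matrix.cons_val,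
      RCLike.inner_apply, conj_trivial, Fin.sum_univ_three, Equiv.Perm.mul_apply,
      Equiv.swap_apply_def, Equiv.Perm.one_apply, PiLp.smul_apply,
      smul_eq_mul, Fintype.card_perm, Fintype.card_fin, Nat.factorial]
    have h2 := exp_pair ((r:ℝ)*x₀)
    rw [hcos] at h2
    push_cast at h2 ⊢
    ring_nf at h2 ⊢
    linear_combination (norm := ring_nf <;> norm_num) 2 * h2
  have keyG : g2Gencos g2ϖ₁ ((r:ℝ) • (WithLp.toLp 2 (fun j => ![0, 0, x₀] j) : EV 3)) = (((1:ℝ)/6 : ℝ) : ℂ) := by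
    unfold g2Gencos
    simp only [Fintype.sum_prod_type, Fintype.sum_bool]
    rw [perm3_sum]
    norm_num (config := { decide := true }) [g2Act, g2ϖ₁, PiLp.inner_apply, PiLp.toLp_apply, Matrix.cons_val,
      RCLike.inner_apply, conj_trivial, Fin.sum_univ_three, Equiv.Perm.mul_apply,
      Equiv.swap_apply_def, Equiv.Perm.one_apply, PiLp.smul_apply,
      smul_eq_mul, Fintype.card_perm, Fintype.card_fin, Nat.factorial, Fintype.card_prod,
      Fintype.card_bool]
    have h2 := exp_pair ((r:ℝ)*x₀)
    rw [hcos] at h2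
    push_cast at h2 ⊢
    ring_nf at h2 ⊢
    linear_combination (1/3 : ℂ) * h2
  refine ⟨a2_iden r, g2_iden r, ⟨⟨(WithLp.toLp 2 (fun j => ![x₀, -x₀, 0] j) : EV 3), ?_⟩, ?_⟩,
    ⟨⟨(WithLp.toLp 2 (fun j => ![0, 0, x₀] j) : EV 3), ?_⟩, ?_⟩, key25⟩
  · rw [a2_iden r, keyA, Complex.ofReal_re]
    norm_num
  · rintro x ⟨u, hu⟩
    rw [a2_iden r] at hu
    have hx : (2 * ((a2Gencos a2ϖ₁ ((r : ℝ) • u)).re) ^ 2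
        - (2 / 3) * (a2Gencos a2ϖ₁ ((r : ℝ) • u)).re - 1 / 3 : ℝ) = x :=
      Complex.ofReal_inj.mp hu
    nlinarith [sq_nonneg ((a2Gencos a2ϖ₁ ((r : ℝ) • u)).re - 1/6)]
  · rw [g2_iden r, keyG, Complex.ofReal_re]
    norm_num
  · rintro x ⟨u, hu⟩
    rw [g2_iden r] at hu
    have hx : (2 * ((g2Gencos g2ϖ₁ ((r : ℝ) • u)).re) ^ 2
        - (2 / 3) * (g2Gencos g2ϖ₁ ((r : ℝ) • u)).re - 1 / 3 : ℝ) = x :=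
      Complex.ofReal_inj.mp hu
    nlinarith [sq_nonneg ((g2Gencos g2ϖ₁ ((r : ℝ) • u)).re - 1/6)]
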